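/- For the equispaced single-cluster node set x_j = (j−1)Δ, j = 1,…,s, and any integer N with s−1 ≤ N ≤ 2π/((s−1)Δ), the smallest singular value of V_N(x) admits the upper bound σ_min(V_N(x)) ≤ (1/2)√(Nse) ((s−1)NΔ)^{s−1}. -/

import Mathlib

/-- The `(N+1) × s` Vandermonde matrix with nodes `e^{i x_j}` on the unit circle. -/
noncomputable def vand (N : ℕ) {s : ℕ} (x : Fin s → ℝ) :
    Matrix (Fin (N + 1)) (Fin s) ℂ :=
  Matrix.of fun k j => Complex.exp (Complex.I * ((k : ℕ) : ℝ) * x j)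

/-- The smallest singular value of a complex matrix. -/
noncomputable def smin {m n : Type*} [Fintype m] [Fintype n] [DecidableEq n]
    (V : Matrix m n ℂ) : ℝ :=
  Real.sqrt (⨅ i, (Matrix.isHermitian_conjTranspose_mul_self V).eigenvalues i)

open Matrix

/-- Rayleigh quotient bound: the smallest eigenvalue of `VᴴV` is at most the Rayleigh
quotient of any vector `v`. -/
lemma rayleigh_aux {m n : Type*} [Fintype m] [Fintype n] [DecidableEq n] [Nonempty n]
    (V : Matrix m n ℂ) (v : n → ℂ) :
    (⨅ i, (Matrix.isHermitian_conjTranspose_mul_self V).eigenvalues i) *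
      (∑ j, Complex.normSq (v j)) ≤ ∑ k, Complex.normSq ((V *ᵥ v) k) := by
  set hA := Matrix.isHermitian_conjTranspose_mul_self V with hhA
  set U : Matrix n n ℂ := (hA.eigenvectorUnitary : Matrix n n ℂ) with hU
  have hU1 : U * star U = 1 := Unitary.mul_star_self_of_mem hA.eigenvectorUnitary.2
  set w : n → ℂ := (star U) *ᵥ v with hw
  have hsw : star w = star v ᵥ* U := by
    rw [hw, star_mulVec, star_eq_conjTranspose, conjTranspose_conjTranspose]
  -- norm preservation
  have hnorm : ∑ i, Complex.normSq (w i) = ∑ i, Complex.normSq (v i) := by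
    have h1 : star w ⬝ᵥ w = star v ⬝ᵥ v := by
      rw [hsw, hw, ← dotProduct_mulVec, mulVec_mulVec, hU1, one_mulVec]
    have h2 := congrArg Complex.re h1
    simpa [dotProduct, Complex.re_sum, Complex.normSq_eq_conj_mul_self, Complex.normSq_apply] using h2
  -- quadratic form identity
  have hquad : ∑ k, Complex.normSq ((V *ᵥ v) k) = ∑ i, hA.eigenvalues i * Complex.normSq (w i) := by
    have h1 : star (V *ᵥ v) ⬝ᵥ (V *ᵥ v) = star v ⬝ᵥ ((Vᴴ * V) *ᵥ v) := by
      rw [star_mulVec, ← dotProduct_mulVec, mulVec_mulVec]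
    have h2 : (Vᴴ * V) *ᵥ v
        = U *ᵥ (Matrix.diagonal (RCLike.ofReal ∘ hA.eigenvalues) *ᵥ w) := by
      conv_lhs => rw [hA.spectral_theorem, Unitary.conjStarAlgAut_apply]
      rw [mulVec_mulVec, mulVec_mulVec]
    have h3 : star v ⬝ᵥ (U *ᵥ (Matrix.diagonal (RCLike.ofReal ∘ hA.eigenvalues) *ᵥ w))
        = star w ⬝ᵥ (Matrix.diagonal (RCLike.ofReal ∘ hA.eigenvalues) *ᵥ w) := by
      rw [dotProduct_mulVec, hsw]
    have h4 := congrArg Complex.re (h1.trans (by rw [h2, h3]))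
    have lhs_eq : (star (V *ᵥ v) ⬝ᵥ (V *ᵥ v)).re = ∑ k, Complex.normSq ((V *ᵥ v) k) := by
      simp [dotProduct, Complex.re_sum, Complex.normSq_eq_conj_mul_self,
        Complex.normSq_apply]
    have rhs_eq : (star w ⬝ᵥ (Matrix.diagonal (RCLike.ofReal ∘ hA.eigenvalues) *ᵥ w)).re
        = ∑ i, hA.eigenvalues i * Complex.normSq (w i) := by
      have key : ∀ (r : ℝ) (z : ℂ), (star z * ((r : ℂ) * z)).re = r * Complex.normSq z := by
        intro r z
        simp only [Complex.normSq_apply, Complex.mul_re, Complex.mul_im, RCLike.star_def,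
          Complex.conj_re, Complex.conj_im, Complex.ofReal_re, Complex.ofReal_im]
        ring
      simp only [dotProduct, mulVec_diagonal, Complex.re_sum, Pi.star_apply,
        Function.comp_apply]
      exact Finset.sum_congr rfl fun i _ => key _ _
    rw [← lhs_eq, h4, rhs_eq]
  rw [hquad, ← hnorm, Finset.mul_sum]
  refine Finset.sum_le_sum fun i _ => ?_
  have hinf : (⨅ i, hA.eigenvalues i) ≤ hA.eigenvalues i :=
    ciInf_le (Set.Finite.bddBelow (Set.finite_range _)) i
  exact mul_le_mul_of_nonneg_right hinf (Complex.normSq_nonneg _)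

set_option maxRecDepth 8000 in
set_option maxHeartbeats 1000000 in
/-- **Upper bound for the equispaced single cluster**: for the nodes `x_j = (j−1)Δ`,
`j = 1,…,s`, and any integer `N` with `s−1 ≤ N ≤ 2π/((s−1)Δ)`,
`σ_min(V_N(x)) ≤ (1/2)√(Nse)((s−1)NΔ)^{s−1}`. -/
theorem equispaced_upper_bound (s N : ℕ) (Δ : ℝ) (hs : 2 ≤ s) (hΔ : 0 < Δ)
    (hN1 : (s : ℝ) - 1 ≤ N) (hN2 : (N : ℝ) ≤ 2 * Real.pi / (((s : ℝ) - 1) * Δ)) :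
    smin (vand N fun j : Fin s => (j : ℕ) * Δ) ≤
      (1 / 2) * Real.sqrt (N * s * Real.exp 1) *
        (((s : ℝ) - 1) * N * Δ) ^ (s - 1) := by
  have hs1 : (1:ℝ) ≤ (s:ℝ) - 1 := by
    have : (2:ℝ) ≤ (s:ℝ) := by exact_mod_cast hs
    linarith
  have hN0 : (1:ℝ) ≤ (N:ℝ) := le_trans hs1 hN1
  haveI : Nonempty (Fin s) := ⟨⟨0, by omega⟩⟩
  set a : ℝ := (s:ℝ) - 1 with ha
  set V := vand N fun j : Fin s => ((j : ℕ) : ℝ) * Δ with hV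
  set v : Fin s → ℂ := fun j => (-1) ^ (j:ℕ) * ((s-1).choose (j:ℕ) : ℂ) with hv
  -- the image V *ᵥ v
  have hmv : ∀ k : Fin (N+1),
      (V *ᵥ v) k = (1 - Complex.exp ((((k:ℕ):ℝ) * Δ : ℝ) * Complex.I)) ^ (s-1) := by
    intro k
    set wk : ℂ := Complex.exp ((((k:ℕ):ℝ) * Δ : ℝ) * Complex.I) with hwk
    have hentry : ∀ j : Fin s, V k j = wk ^ (j:ℕ) := by
      intro j
      show Complex.exp (Complex.I * (((k:ℕ):ℝ) : ℂ) * ((((j:ℕ):ℝ) * Δ : ℝ) : ℂ)) = _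
      rw [hwk, ← Complex.exp_nat_mul]
      congr 1
      push_cast
      ring
    have : (V *ᵥ v) k
        = ∑ j ∈ Finset.range s, (-wk) ^ j * 1 ^ (s - 1 - j) * ((s-1).choose j : ℂ) := by
      rw [Matrix.mulVec, ← Fin.sum_univ_eq_sum_range
        (fun j => (-wk) ^ j * 1 ^ (s - 1 - j) * ((s-1).choose j : ℂ)) s]
      refine Finset.sum_congr rfl fun j _ => ?_
      show V k j * v j = _
      rw [hentry j, hv]
      rw [neg_pow, one_pow]
      ring
    rw [this]
    have hrange : Finset.range s = Finset.range ((s - 1) + 1) := by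
      congr 1
      omega
    rw [hrange, ← add_pow (-wk) 1 (s-1), neg_add_eq_sub]
  -- bound on each component of the image
  have himg : ∀ k : Fin (N+1),
      Complex.normSq ((V *ᵥ v) k) ≤ (((N:ℝ) * Δ) ^ 2) ^ (s-1) := by
    intro k
    rw [hmv k, map_pow]
    refine pow_le_pow_left₀ (Complex.normSq_nonneg _) ?_ _
    set θ : ℝ := ((k:ℕ):ℝ) * Δ with hθ
    have hθ0 : 0 ≤ θ := mul_nonneg (Nat.cast_nonneg _) hΔ.le
    have hθN : θ ≤ (N:ℝ) * Δ := by
      have : ((k:ℕ):ℝ) ≤ (N:ℝ) := by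
        exact_mod_cast Nat.lt_succ_iff.mp k.isLt
      exact mul_le_mul_of_nonneg_right this hΔ.le
    have h1 : Complex.normSq (1 - Complex.exp ((θ:ℝ) * Complex.I))
        = 2 - 2 * Real.cos θ := by
      rw [Complex.normSq_apply]
      simp [Complex.sub_re, Complex.sub_im, Complex.exp_ofReal_mul_I_re,
        Complex.exp_ofReal_mul_I_im]
      nlinarith [Real.sin_sq_add_cos_sq θ]
    rw [h1]
    have h2 : 1 - θ ^ 2 / 2 ≤ Real.cos θ := Real.one_sub_sq_div_two_le_cos
    nlinarith
  -- lower bound on the norm of v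
  have hvlow : 1 + a ^ 2 ≤ ∑ j, Complex.normSq (v j) := by
    have h0 : Complex.normSq (v ⟨0, by omega⟩) = 1 := by simp [hv]
    have h1 : Complex.normSq (v ⟨1, by omega⟩) = a ^ 2 := by
      have hc : ((s-1).choose 1 : ℂ) = ((s:ℝ) - 1 : ℝ) := by
        rw [Nat.choose_one_right]
        push_cast [Nat.cast_sub (by omega : 1 ≤ s)]
        norm_num
      simp only [hv, pow_one, neg_one_mul, Complex.normSq_neg, Fin.val_mk, hc]
      rw [Complex.normSq_ofReal, ha]
      ring
    have hsub : ({⟨0, by omega⟩, ⟨1, by omega⟩} : Finset (Fin s)) ⊆ Finset.univ :=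
      Finset.subset_univ _
    have hne : (⟨0, by omega⟩ : Fin s) ≠ ⟨1, by omega⟩ := by
      simp [Fin.ext_iff]
    calc 1 + a ^ 2
        = ∑ j ∈ ({⟨0, by omega⟩, ⟨1, by omega⟩} : Finset (Fin s)), Complex.normSq (v j) := by
          rw [Finset.sum_pair hne, h0, h1]
      _ ≤ ∑ j, Complex.normSq (v j) :=
          Finset.sum_le_sum_of_subset_of_nonneg hsub
            (fun i _ _ => Complex.normSq_nonneg _)
  -- upper bound on the norm of the image
  have hup : ∑ k, Complex.normSq ((V *ᵥ v) k)
      ≤ ((N:ℝ) + 1) * (((N:ℝ) * Δ) ^ 2) ^ (s-1) := by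
    calc ∑ k, Complex.normSq ((V *ᵥ v) k)
        ≤ ∑ _k : Fin (N+1), (((N:ℝ) * Δ) ^ 2) ^ (s-1) :=
          Finset.sum_le_sum fun k _ => himg k
      _ = ((N:ℝ) + 1) * (((N:ℝ) * Δ) ^ 2) ^ (s-1) := by
          rw [Finset.sum_const, Finset.card_univ, Fintype.card_fin]
          push_cast
          ring
  -- Rayleigh quotient
  set μ : ℝ := ⨅ i, (Matrix.isHermitian_conjTranspose_mul_self V).eigenvalues i with hμ
  have hμ0 : 0 ≤ μ :=
    le_ciInf fun i => Matrix.eigenvalues_conjTranspose_mul_self_nonneg V i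
  have hray := rayleigh_aux V v
  have hkey : μ * (1 + a ^ 2) ≤ ((N:ℝ) + 1) * (((N:ℝ) * Δ) ^ 2) ^ (s-1) := by
    calc μ * (1 + a ^ 2) ≤ μ * ∑ j, Complex.normSq (v j) := by
          nlinarith [mul_nonneg hμ0 (sub_nonneg.mpr hvlow)]
      _ ≤ ∑ k, Complex.normSq ((V *ᵥ v) k) := hray
      _ ≤ ((N:ℝ) + 1) * (((N:ℝ) * Δ) ^ 2) ^ (s-1) := hup
  -- final numeric comparison
  set T : ℝ := (1 / 2) * Real.sqrt ((N:ℝ) * (s:ℝ) * Real.exp 1) * (a * (N:ℝ) * Δ) ^ (s - 1)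
    with hT
  have haNΔ : 0 ≤ a * (N:ℝ) * Δ := by positivity
  have hT0 : 0 ≤ T := by positivity
  have hTsq : T ^ 2 = (1/4) * ((N:ℝ) * (s:ℝ) * Real.exp 1) * (a ^ 2) ^ (s-1)
      * (((N:ℝ) * Δ) ^ 2) ^ (s-1) := by
    rw [hT]
    have hNse : (0:ℝ) ≤ (N:ℝ) * (s:ℝ) * Real.exp 1 := by positivity
    have h1 : ((a * (N:ℝ) * Δ) ^ (s-1)) ^ 2 = ((a * (N:ℝ) * Δ) ^ 2) ^ (s-1) := by
      rw [← pow_mul, ← pow_mul, Nat.mul_comm]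
    have h2 : (a * (N:ℝ) * Δ) ^ 2 = a ^ 2 * ((N:ℝ) * Δ) ^ 2 := by ring
    rw [mul_pow, mul_pow, Real.sq_sqrt hNse, h1, h2, mul_pow]
    ring
  have hμT : μ ≤ T ^ 2 := by
    have hpos : (0:ℝ) < 1 + a ^ 2 := by nlinarith
    have hscal : ((N:ℝ) + 1) ≤ (1 + a ^ 2) * ((1/4) * ((N:ℝ) * (s:ℝ) * Real.exp 1)
        * (a ^ 2) ^ (s-1)) := by
      have he : (2:ℝ) ≤ Real.exp 1 := by
        have := Real.add_one_le_exp (1:ℝ)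
        linarith
      have hps : (1:ℝ) ≤ (a ^ 2) ^ (s-1) := one_le_pow₀ (by nlinarith)
      have hs2 : (2:ℝ) ≤ (s:ℝ) := by exact_mod_cast hs
      have hA2 : (2:ℝ) ≤ 1 + a ^ 2 := by nlinarith
      have hX : 4 * (N:ℝ) ≤ (N:ℝ) * (s:ℝ) * Real.exp 1 := by
        nlinarith [mul_nonneg (mul_nonneg (by linarith : (0:ℝ) ≤ (N:ℝ))
            (by linarith : (0:ℝ) ≤ (s:ℝ) - 2)) (by linarith : (0:ℝ) ≤ Real.exp 1),
          mul_nonneg (by linarith : (0:ℝ) ≤ (N:ℝ)) (by linarith : (0:ℝ) ≤ Real.exp 1 - 2)]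
      have hXt : 4 * (N:ℝ) ≤ (N:ℝ) * (s:ℝ) * Real.exp 1 * ((a ^ 2) ^ (s-1)) := by nlinarith
      have hmm : 2 * (4 * (N:ℝ)) ≤ (1 + a ^ 2) * ((N:ℝ) * (s:ℝ) * Real.exp 1
          * ((a ^ 2) ^ (s-1))) :=
        mul_le_mul hA2 hXt (by linarith) (by linarith)
      nlinarith [hmm]
    have hX : (0:ℝ) ≤ (((N:ℝ) * Δ) ^ 2) ^ (s-1) := by positivity
    have h3 : ((N:ℝ) + 1) * (((N:ℝ) * Δ) ^ 2) ^ (s-1)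
        ≤ (1 + a ^ 2) * T ^ 2 := by
      rw [hTsq]
      calc ((N:ℝ) + 1) * (((N:ℝ) * Δ) ^ 2) ^ (s-1)
          ≤ ((1 + a ^ 2) * ((1/4) * ((N:ℝ) * (s:ℝ) * Real.exp 1) * (a ^ 2) ^ (s-1)))
            * (((N:ℝ) * Δ) ^ 2) ^ (s-1) :=
            mul_le_mul_of_nonneg_right hscal hX
        _ = (1 + a ^ 2) * ((1/4) * ((N:ℝ) * (s:ℝ) * Real.exp 1) * (a ^ 2) ^ (s-1)
            * (((N:ℝ) * Δ) ^ 2) ^ (s-1)) := by ring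
    have h4 : μ * (1 + a ^ 2) ≤ (1 + a ^ 2) * T ^ 2 := le_trans hkey h3
    nlinarith
  -- conclude
  have : smin V = Real.sqrt μ := rfl
  rw [this]
  calc Real.sqrt μ ≤ Real.sqrt (T ^ 2) := Real.sqrt_le_sqrt hμT
    _ = T := Real.sqrt_sq hT0
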